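/- arXiv:0710.1527 — 2 statements merged into one kernel-verified Lean document; each statement's English description precedes it below -/
import Mathlib

section
/- Fix k ≥ 1. Define E₀: A → A by E₀ = τ (the index-shift map) on A = ℂ[x₁, x₂, …]. Then E₀ restricts to a linear bijection from A onto B = ℂ[x₂, x₃, …], and E₀(I_{k,0}) = I'_{k,k}, where I_{k,0} = Σ_{t≥k+1} A·R⁰_{k,t} and I'_{k,k} = Σ_{t ≥ 2(k+1)} B·R¹_{k,t}. -/
open MvPolynomial

noncomputable section

abbrev A : Type := MvPolynomial ℕ+ ℂ

/-- weight function: `x_m` has weight `m`. -/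
def wtA : ℕ+ → ℕ := fun m => (m : ℕ)

/-- the index-shift map `τ : x_m ↦ x_{m+1}` (multiplicative on monomials). -/
def tau : A →ₐ[ℂ] A := rename (fun m => m + 1)

/-- `B = ℂ[x₂, x₃, …]`, the subalgebra generated by the variables `x_m`, `m ≥ 2`. -/
def BB : Subalgebra ℂ A := Algebra.adjoin ℂ {p : A | ∃ m : ℕ+, 2 ≤ m ∧ p = X m}

/-- `R⁰_{k,t}`: sum over ordered `(k+1)`-tuples of integers `≥ 1` summing to `t`. -/
def R0 (k t : ℕ) : A :=
  ∑ m ∈ (Finset.Nat.antidiagonalTuple (k+1) t).filter (fun m => ∀ i, 1 ≤ m i),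
    ∏ i, X ((m i).toPNat')

/-- `R¹_{k,t}`: sum over ordered `(k+1)`-tuples of integers `≥ 2` summing to `t`. -/
def R1 (k t : ℕ) : A :=
  ∑ m ∈ (Finset.Nat.antidiagonalTuple (k+1) t).filter (fun m => ∀ i, 2 ≤ m i),
    ∏ i, X ((m i).toPNat')

/-- the projection `ρ : A → B` along `A·x₁` (set `x₁ = 0`). -/
def rho : A →ₐ[ℂ] A := aeval (fun m : ℕ+ => if m = 1 then 0 else X m)

/-- `I_{k,0} = Σ_{t ≥ k+1} A·R⁰_{k,t}`. -/
def Ik0 (k : ℕ) : Ideal A := Ideal.span {p : A | ∃ t, k + 1 ≤ t ∧ p = R0 k t}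

/-- `I_{k,i} = Σ_{t ≥ k+1} A·R⁰_{k,t} + A·x₁^{k-i+1}`. -/
def Ik (k i : ℕ) : Ideal A := Ik0 k ⊔ Ideal.span {X 1 ^ (k - i + 1)}

/-- `I'_{k,k} = Σ_{t ≥ 2(k+1)} B·R¹_{k,t}` as a ℂ-subspace of `A`. -/
def Ipkk (k : ℕ) : Submodule ℂ A :=
  Submodule.span ℂ {p : A | ∃ t, 2*(k+1) ≤ t ∧ ∃ b ∈ BB, p = b * R1 k t}

end
lemma tau_X' (n : ℕ+) : tau (X n) = X (n + 1) := rename_X _ _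

lemma tau_range_subset : ∀ p : A, tau p ∈ BB := by
  intro p
  induction p using MvPolynomial.induction_on with
  | C a => simpa [tau] using (BB.algebraMap_mem a)
  | add p q hp hq => rw [map_add]; exact add_mem hp hq
  | mul_X p n hp =>
      rw [map_mul, tau_X']
      refine mul_mem hp (Algebra.subset_adjoin ⟨n + 1, ?_, rfl⟩)
      have := n.one_le
      exact add_le_add_left this 1

lemma tau_range_eq : Set.range ⇑tau = (BB : Set A) := by
  apply Set.Subset.antisymm
  · rintro _ ⟨p, rfl⟩; exact tau_range_subset p
  · intro p hp
    have hle : BB ≤ tau.range := by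
      apply Algebra.adjoin_le
      rintro _ ⟨m, hm, rfl⟩
      have h2 : (2:ℕ) ≤ (m:ℕ) := hm
      set n : ℕ+ := ⟨(m:ℕ) - 1, by omega⟩ with hn
      have hmn : n + 1 = m := by
        apply PNat.coe_injective
        rw [PNat.add_coe, hn]
        simp
        omega
      exact ⟨X n, by rw [show (tau.toRingHom (X n) : A) = X (n+1) from rename_X _ _, hmn]⟩
    exact hle hp

lemma tau_R0 (k s : ℕ) : tau (R0 k s) = R1 k (s + (k+1)) := by
  unfold R0 R1
  rw [map_sum]
  apply Finset.sum_nbij' (i := fun m => fun j => m j + 1) (j := fun m => fun j => m j - 1)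
  · intro m hm
    rw [Finset.mem_filter, Finset.Nat.mem_antidiagonalTuple] at hm ⊢
    obtain ⟨h1, h2⟩ := hm
    refine ⟨?_, fun j => by have := h2 j; beta_reduce; omega⟩
    rw [Finset.sum_add_distrib, h1]
    simp
  · intro m hm
    rw [Finset.mem_filter, Finset.Nat.mem_antidiagonalTuple] at hm ⊢
    obtain ⟨h1, h2⟩ := hm
    refine ⟨?_, fun j => by have := h2 j; beta_reduce; omega⟩
    have key : ∑ j, (m j - 1 + 1) = ∑ j, m j :=
      Finset.sum_congr rfl (fun j _ => by have := h2 j; omega)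
    rw [Finset.sum_add_distrib, h1] at key
    simp at key
    omega
  · intro m hm
    funext j; simp
  · intro m hm
    rw [Finset.mem_filter] at hm
    funext j
    have := hm.2 j
    simp
    omega
  · intro m hm
    rw [Finset.mem_filter] at hm
    rw [map_prod]
    refine Finset.prod_congr rfl (fun j _ => ?_)
    rw [tau_X']
    congr 1
    apply PNat.coe_injective
    have h1 := hm.2 j
    have e1 : ((m j).toPNat' : ℕ) = m j := PNat.toPNat'_coe (by omega)
    have e2 : ((m j + 1).toPNat' : ℕ) = m j + 1 := PNat.toPNat'_coe (by omega)
    simp [PNat.add_coe, e1, e2]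

lemma tau_inj : Function.Injective tau :=
  rename_injective _ (fun a b h => by simpa using add_left_injective 1 h)

lemma BB_mul_Ipkk (k : ℕ) {b y : A} (hb : b ∈ BB) (hy : y ∈ Ipkk k) : b * y ∈ Ipkk k := by
  unfold Ipkk at hy ⊢
  induction hy using Submodule.span_induction with
  | mem p hp =>
      obtain ⟨t, ht, b', hb', rfl⟩ := hp
      exact Submodule.subset_span ⟨t, ht, b * b', mul_mem hb hb', (mul_assoc _ _ _).symm⟩
  | zero => simpa using Submodule.zero_mem _
  | add x y _ _ hx hy => rw [show b*(x+y) = b*x + b*y from mul_add b x y]; exact add_mem hx hy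
  | smul c x _ hx => rw [mul_smul_comm]; exact Submodule.smul_mem _ _ hx

lemma tau_Ik0_mem (k : ℕ) {x : A} (hx : x ∈ Ik0 k) : tau x ∈ Ipkk k := by
  unfold Ik0 at hx
  induction hx using Submodule.span_induction with
  | mem p hp =>
      obtain ⟨t, ht, rfl⟩ := hp
      rw [tau_R0]
      exact Submodule.subset_span ⟨t + (k+1), by omega, 1, one_mem _, (one_mul _).symm⟩
  | zero => rw [map_zero]; exact zero_mem _
  | add x y _ _ hx hy => rw [map_add]; exact add_mem hx hy
  | smul a x _ hx => rw [smul_eq_mul, map_mul]; exact BB_mul_Ipkk k (tau_range_subset a) hx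

lemma Ipkk_subset (k : ℕ) : (Ipkk k : Set A) ⊆ ⇑tau '' (Ik0 k : Set A) := by
  intro x hx
  rw [SetLike.mem_coe] at hx
  unfold Ipkk at hx
  induction hx using Submodule.span_induction with
  | mem p hp =>
      obtain ⟨t, ht, b, hb, rfl⟩ := hp
      have hb' : b ∈ Set.range ⇑tau := tau_range_eq ▸ hb
      obtain ⟨a, rfl⟩ := hb'
      refine ⟨a * R0 k (t - (k+1)), ?_, ?_⟩
      · exact Ideal.mul_mem_left _ _ (Ideal.subset_span ⟨t - (k+1), by omega, rfl⟩)
      · rw [map_mul, tau_R0]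
        congr 2
        omega
  | zero => exact ⟨0, (Ik0 k).zero_mem, map_zero _⟩
  | add x y _ _ hx hy =>
      obtain ⟨u, hu, rfl⟩ := hx
      obtain ⟨v, hv, rfl⟩ := hy
      exact ⟨u + v, add_mem hu hv, map_add _ _ _⟩
  | smul c x _ hx =>
      obtain ⟨u, hu, rfl⟩ := hx
      exact ⟨c • u, by rw [SetLike.mem_coe, Algebra.smul_def]; exact Ideal.mul_mem_left _ _ hu,
        map_smul _ _ _⟩

/-- `E₀ = τ` is a linear bijection from `A` onto `B`, and
`τ(I_{k,0}) = I'_{k,k}`. -/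
theorem stmt13 (k : ℕ) (hk : 1 ≤ k) :
    Function.Injective tau ∧ Set.range ⇑tau = (BB : Set A) ∧
    ⇑tau '' ((Ik0 k : Set A)) = (Ipkk k : Set A) := by
  refine ⟨tau_inj, tau_range_eq, Set.Subset.antisymm ?_ (Ipkk_subset k)⟩
  rintro _ ⟨x, hx, rfl⟩
  exact tau_Ik0_mem k hx
end

section
/- Fix k ≥ 1. For t ≥ k+1, τ(R⁰_{k,t}) ≡ R⁰_{k,t+k+1} modulo the ideal A·x₁; more generally, for every a in the ideal I_{k,0} = Σ_{t≥k+1} A·R⁰_{k,t} there exist b ∈ I_{k,0} and c ∈ A with τ(a) = b + c·x₁ (so that τ(I_{k,0}) ⊆ I_{k,k} where I_{k,k} = I_{k,0} + A·x₁). -/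
open MvPolynomial

noncomputable section
lemma aux_toPNat'_succ (n : ℕ) (hn : 1 ≤ n) : (n.toPNat' + 1 : ℕ+) = (n+1).toPNat' := by
  apply PNat.coe_injective
  simp only [PNat.add_coe, PNat.one_coe, Nat.toPNat']
  simp [Nat.succPNat]
  omega

lemma aux_R0_sub (k s : ℕ) : ∃ c : A, R0 k s = R1 k s + c * X 1 := by
  classical
  have hsub : (Finset.Nat.antidiagonalTuple (k+1) s).filter (fun m => ∀ i, 2 ≤ m i)
      ⊆ (Finset.Nat.antidiagonalTuple (k+1) s).filter (fun m => ∀ i, 1 ≤ m i) := by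
    intro m hm
    simp only [Finset.mem_filter] at *
    exact ⟨hm.1, fun i => le_trans one_le_two (hm.2 i)⟩
  have hdvd : (X 1 : A) ∣ ∑ m ∈ (Finset.Nat.antidiagonalTuple (k+1) s).filter (fun m => ∀ i, 1 ≤ m i) \ (Finset.Nat.antidiagonalTuple (k+1) s).filter (fun m => ∀ i, 2 ≤ m i), ∏ i, X ((m i).toPNat') := by
    apply Finset.dvd_sum
    intro m hm
    simp only [Finset.mem_sdiff, Finset.mem_filter] at hm
    obtain ⟨⟨hmem, h1⟩, h2⟩ := hm
    have : ∃ i, m i = 1 := by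
      by_contra h
      push_neg at h
      exact h2 ⟨hmem, fun i => (h1 i).lt_of_ne (Ne.symm (h i))⟩
    obtain ⟨i, hi⟩ := this
    have := Finset.dvd_prod_of_mem (fun i => (X ((m i).toPNat') : A)) (Finset.mem_univ i)
    simp only [hi] at this
    exact (show Nat.toPNat' 1 = 1 from rfl) ▸ this
  obtain ⟨c, hc⟩ := hdvd
  refine ⟨c, ?_⟩
  rw [R0, R1, ← Finset.sum_sdiff hsub, hc]
  ring

lemma aux_tau_R0 (k t : ℕ) : tau (R0 k t) = R1 k (t + k + 1) := by
  rw [R0, R1, map_sum]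
  refine Finset.sum_nbij' (i := fun m => fun j => m j + 1) (j := fun m => fun j => m j - 1)
    ?_ ?_ ?_ ?_ ?_
  · intro m hm
    simp only [Finset.mem_filter, Finset.Nat.mem_antidiagonalTuple] at *
    constructor
    · rw [Finset.sum_add_distrib, hm.1]
      simp
      omega
    · intro i; have := hm.2 i; omega
  · intro m hm
    simp only [Finset.mem_filter, Finset.Nat.mem_antidiagonalTuple] at *
    constructor
    · have e : ∑ i, (m i - 1 + 1) = ∑ i, m i :=
        Finset.sum_congr rfl (fun i _ => by have := hm.2 i; omega)
      rw [Finset.sum_add_distrib, hm.1] at e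
      simp at e
      omega
    · intro i; have := hm.2 i; omega
  · intro m hm
    funext j
    show m j + 1 - 1 = m j
    omega
  · intro m hm
    simp only [Finset.mem_filter] at hm
    funext j
    show m j - 1 + 1 = m j
    have := hm.2 j
    omega
  · intro m hm
    simp only [Finset.mem_filter] at hm
    rw [tau, map_prod]
    refine Finset.prod_congr rfl fun i _ => ?_
    rw [rename_X, aux_toPNat'_succ _ (hm.2 i)]

end
/-- `τ(R⁰_{k,t}) ≡ R⁰_{k,t+k+1}` mod `A·x₁` for `t ≥ k+1`; more
generally every `a ∈ I_{k,0}` has `τ(a) = b + c·x₁` with `b ∈ I_{k,0}`. -/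
theorem stmt14 (k : ℕ) (hk : 1 ≤ k) :
    (∀ t, k + 1 ≤ t → ∃ c : A, tau (R0 k t) = R0 k (t + k + 1) + c * X 1) ∧
    ∀ a ∈ Ik0 k, ∃ b ∈ Ik0 k, ∃ c : A, tau a = b + c * X 1 := by
  have part1 : ∀ t : ℕ, ∃ c : A, tau (R0 k t) = R0 k (t + k + 1) + c * X 1 := by
    intro t
    obtain ⟨c, hc⟩ := aux_R0_sub k (t + k + 1)
    exact ⟨-c, by rw [aux_tau_R0, hc]; ring⟩
  refine ⟨fun t _ => part1 t, ?_⟩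
  intro a ha
  refine Submodule.span_induction ?_ ?_ ?_ ?_ ha
  · rintro p ⟨t, ht, rfl⟩
    obtain ⟨c, hc⟩ := part1 t
    exact ⟨R0 k (t + k + 1), Ideal.subset_span ⟨t + k + 1, by omega, rfl⟩, c, hc⟩
  · exact ⟨0, Ideal.zero_mem _, 0, by simp⟩
  · rintro x y - - ⟨b1, hb1, c1, h1⟩ ⟨b2, hb2, c2, h2⟩
    exact ⟨b1 + b2, Ideal.add_mem _ hb1 hb2, c1 + c2, by rw [map_add, h1, h2]; ring⟩
  · rintro r x - ⟨b, hb, c, h⟩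
    refine ⟨tau r * b, Ideal.mul_mem_left _ _ hb, tau r * c, ?_⟩
    have : r • x = r * x := rfl
    rw [this, map_mul, h]; ring
end
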